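/- For any compact metric spaces X, Y and continuous maps f : X → Y and g : Y → X, the topological entropy of f ∘ g : Y → Y equals the topological entropy of g ∘ f : X → X. -/

import Mathlib

open Set Metric Filter Topology

/-- A set `E` is `(n, ε)`-separated for `T` if any two distinct points of `E` are
`ε`-separated along the first `n` iterates. -/
def IsDynSeparated {X : Type*} [MetricSpace X] (T : X → X) (n : ℕ) (ε : ℝ)
    (E : Set X) : Prop :=
  E.Pairwise fun a b => ∃ i ≤ n, ε ≤ dist (T^[i] a) (T^[i] b)

/-- The maximal cardinality of an `(n, ε)`-separated set. -/
noncomputable def maxSep {X : Type*} [MetricSpace X] (T : X → X) (n : ℕ) (ε : ℝ) : ℕ :=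
  sSup {k : ℕ | ∃ E : Finset X, IsDynSeparated T n ε (E : Set X) ∧ E.card = k}

/-- Topological entropy via separated sets:
`h_top(T) = lim_{ε→0} limsup_{n→∞} (1/n) log s(n, ε)`. -/
noncomputable def topEnt {X : Type*} [MetricSpace X] (T : X → X) : EReal :=
  ⨆ (ε : ℝ) (_ : 0 < ε),
    Filter.atTop.limsup fun n : ℕ => ((Real.log (maxSep T n ε) / n : ℝ) : EReal)

section Aux

variable {X : Type*} [MetricSpace X]

lemma IsDynSeparated.mono_n {T : X → X} {n m : ℕ} (h : n ≤ m) {ε : ℝ} {E : Set X}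
    (hE : IsDynSeparated T n ε E) : IsDynSeparated T m ε E :=
  hE.imp fun _ _ ⟨i, hi, hd⟩ => ⟨i, hi.trans h, hd⟩

lemma bddAbove_sepSet [CompactSpace X] (T : X → X) (n : ℕ) {ε : ℝ} (hε : 0 < ε) :
    BddAbove {k : ℕ | ∃ E : Finset X, IsDynSeparated T n ε (E : Set X) ∧ E.card = k} := by
  obtain ⟨t, ht, hcov⟩ :=
    Metric.totallyBounded_iff.1
      (isCompact_univ (X := Fin (n + 1) → X)).totallyBounded (ε / 2) (by linarith)
  set Φ : X → (Fin (n + 1) → X) := fun a i => T^[(i : ℕ)] a with hΦ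
  have hmem : ∀ a : X, ∃ c ∈ t, Φ a ∈ ball c (ε / 2) := by
    intro a
    have := hcov (mem_univ (Φ a))
    simpa using this
  choose c hct hcb using hmem
  refine ⟨ht.toFinset.card, ?_⟩
  rintro k ⟨E, hE, rfl⟩
  apply Finset.card_le_card_of_injOn c
  · intro a _; simpa using hct a
  · intro a ha b hb hcab
    by_contra hab
    obtain ⟨i, hi, hd⟩ := hE ha hb hab
    have h1 : dist (T^[i] a) (T^[i] b) ≤ dist (Φ a) (Φ b) :=
      dist_le_pi_dist (Φ a) (Φ b) ⟨i, by omega⟩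
    have h2 : dist (Φ a) (Φ b) ≤ dist (Φ a) (c a) + dist (Φ b) (c a) :=
      dist_triangle_right _ _ _
    rw [hcab] at h2
    have h3 : dist (Φ a) (c a) < ε / 2 := mem_ball.1 (hcb a)
    rw [hcab] at h3
    have h4 : dist (Φ b) (c b) < ε / 2 := mem_ball.1 (hcb b)
    linarith

lemma card_le_maxSep [CompactSpace X] {T : X → X} {n : ℕ} {ε : ℝ} (hε : 0 < ε)
    {E : Finset X} (hE : IsDynSeparated T n ε (E : Set X)) : E.card ≤ maxSep T n ε :=
  le_csSup (bddAbove_sepSet T n hε) ⟨E, hE, rfl⟩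

lemma exists_maxSep [CompactSpace X] (T : X → X) (n : ℕ) {ε : ℝ} (hε : 0 < ε) :
    ∃ E : Finset X, IsDynSeparated T n ε (E : Set X) ∧ E.card = maxSep T n ε :=
by
  have hne : {k : ℕ | ∃ E : Finset X, IsDynSeparated T n ε (E : Set X) ∧ E.card = k}.Nonempty :=
    ⟨0, ∅, by simp [IsDynSeparated], by simp⟩
  exact Nat.sSup_mem hne (bddAbove_sepSet T n hε)

lemma maxSep_mono_n [CompactSpace X] (T : X → X) {n m : ℕ} (h : n ≤ m) {ε : ℝ}
    (hε : 0 < ε) : maxSep T n ε ≤ maxSep T m ε := by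
  obtain ⟨E, hE, hc⟩ := exists_maxSep T n hε
  rw [← hc]
  exact card_le_maxSep hε (hE.mono_n h)

/-- A maximal `(n, δ)`-separated set is `(n, δ)`-spanning. -/
lemma maximal_spanning [CompactSpace X] {T : X → X} {n : ℕ} {δ : ℝ} (hδ : 0 < δ)
    {F : Finset X} (hF : IsDynSeparated T n δ (F : Set X))
    (hmax : F.card = maxSep T n δ) (x : X) :
    ∃ z ∈ F, ∀ j ≤ n, dist (T^[j] x) (T^[j] z) < δ := by
  classical
  by_contra h
  push_neg at h
  have hx : x ∉ F := by
    intro hx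
    obtain ⟨j, _, hd⟩ := h x hx
    simp only [dist_self] at hd
    linarith
  have hsym : Symmetric fun a b : X => ∃ i ≤ n, δ ≤ dist (T^[i] a) (T^[i] b) := by
    intro a b ⟨i, hi, hd⟩; exact ⟨i, hi, by rwa [dist_comm]⟩
  have hins : IsDynSeparated T n δ ((insert x F : Finset X) : Set X) := by
    rw [Finset.coe_insert]
    haveI : Std.Symm (fun a b : X => ∃ i ≤ n, δ ≤ dist (T^[i] a) (T^[i] b)) := ⟨fun a b h => hsym h⟩
    refine (Set.pairwise_insert_of_symm).2 ⟨hF, fun b hb _ => ?_⟩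
    obtain ⟨j, hj, hd⟩ := h b hb
    exact ⟨j, hj, hd⟩
  have := card_le_maxSep hδ hins
  rw [Finset.card_insert_of_notMem hx, hmax] at this
  omega

lemma comp_iterate_succ_apply {A B : Type*} (f : A → B) (g : B → A) (n : ℕ) (y : B) :
    (f ∘ g)^[n + 1] y = f ((g ∘ f)^[n] (g y)) := by
  induction n with
  | zero => simp
  | succ m ih =>
      rw [Function.iterate_succ_apply', ih, Function.iterate_succ_apply']
      simp

lemma log_nat_nonneg (m : ℕ) : 0 ≤ Real.log m := by
  rcases Nat.eq_zero_or_pos m with h | h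
  · simp [h]
  · exact Real.log_nonneg (by exact_mod_cast h)

lemma log_le_of_le_mul {a b C : ℕ} (h : a ≤ C * b) :
    Real.log a ≤ Real.log C + Real.log b := by
  rcases Nat.eq_zero_or_pos a with ha | ha
  · simp only [ha, Nat.cast_zero, Real.log_zero]
    exact add_nonneg (log_nat_nonneg C) (log_nat_nonneg b)
  · have hb : 0 < b := by
      rcases Nat.eq_zero_or_pos b with hb | hb
      · subst hb; simp only [Nat.mul_zero, Nat.le_zero] at h; omega
      · exact hb
    have hC : 0 < C := by
      rcases Nat.eq_zero_or_pos C with hC | hC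
      · subst hC; simp only [Nat.zero_mul, Nat.le_zero] at h; omega
      · exact hC
    calc Real.log a ≤ Real.log (C * b : ℕ) := by
          apply Real.log_le_log (by exact_mod_cast ha)
          exact_mod_cast h
      _ = Real.log C + Real.log b := by
          push_cast
          exact Real.log_mul (by positivity) (by positivity)

end Aux

/-- Key counting estimate: separated sets for `f ∘ g` are controlled by separated
sets for `g ∘ f`. -/
lemma key_estimate {X Y : Type*} [MetricSpace X] [CompactSpace X]
    [MetricSpace Y] [CompactSpace Y] (f : X → Y) (g : Y → X)
    (hf : Continuous f) {ε : ℝ} (hε : 0 < ε) :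
    ∃ δ > 0, ∃ C : ℕ, 1 ≤ C ∧
      ∀ n : ℕ, maxSep (f ∘ g) (n + 1) ε ≤ C * maxSep (g ∘ f) (n + 1) δ := by
  obtain ⟨δ, hδ0, hδ⟩ :=
    Metric.uniformContinuous_iff.1 (CompactSpace.uniformContinuous_of_continuous hf)
      (ε / 2) (by linarith)
  obtain ⟨t, ht, hcov⟩ :=
    Metric.totallyBounded_iff.1 (isCompact_univ (X := Y)).totallyBounded (ε / 2)
      (by linarith)
  refine ⟨δ, hδ0, ht.toFinset.card + 1, by omega, fun n => ?_⟩
  obtain ⟨F, hF, hFc⟩ := exists_maxSep (g ∘ f) n hδ0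
  obtain ⟨E, hE, hEc⟩ := exists_maxSep (f ∘ g) (n + 1) hε
  rw [← hEc]
  have hspan : ∀ a : Y, ∃ z ∈ F, ∀ j ≤ n,
      dist ((g ∘ f)^[j] (g a)) ((g ∘ f)^[j] z) < δ :=
    fun a => maximal_spanning hδ0 hF hFc (g a)
  have hnet : ∀ a : Y, ∃ c ∈ t, a ∈ ball c (ε / 2) := by
    intro a; simpa using hcov (mem_univ a)
  choose z hzF hz using hspan
  choose c hct hcb using hnet
  have hcard : E.card ≤ (ht.toFinset ×ˢ F).card := by
    apply Finset.card_le_card_of_injOn (fun a => (c a, z a))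
    · intro a _
      simp only [Finset.mem_coe, Finset.mem_product]
      exact ⟨by simpa using hct a, hzF a⟩
    · intro a ha b hb hab
      by_contra hne
      simp only [Prod.mk.injEq] at hab
      obtain ⟨hcab, hzab⟩ := hab
      obtain ⟨i, hi, hd⟩ := hE ha hb hne
      rcases i with _ | j
      · -- i = 0 : plain distance separation, contradicts same net center
        simp only [Function.iterate_zero, id_eq] at hd
        have h3 : dist a (c a) < ε / 2 := mem_ball.1 (hcb a)
        rw [hcab] at h3
        have h4 : dist b (c b) < ε / 2 := mem_ball.1 (hcb b)
        have htri : dist a b ≤ dist a (c b) + dist b (c b) := dist_triangle_right _ _ _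
        linarith
      · -- i = j + 1 : use semiconjugacy
        have hjn : j ≤ n := by omega
        rw [comp_iterate_succ_apply f g j a, comp_iterate_succ_apply f g j b] at hd
        have h1 : dist (f ((g ∘ f)^[j] (g a))) (f ((g ∘ f)^[j] (z a))) < ε / 2 :=
          hδ (hz a j hjn)
        have h2 : dist (f ((g ∘ f)^[j] (g b))) (f ((g ∘ f)^[j] (z b))) < ε / 2 :=
          hδ (hz b j hjn)
        rw [hzab] at h1
        have := dist_triangle (f ((g ∘ f)^[j] (g a))) (f ((g ∘ f)^[j] (z b)))
          (f ((g ∘ f)^[j] (g b)))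
        rw [dist_comm (f ((g ∘ f)^[j] (z b)))] at this
        linarith
  calc E.card ≤ (ht.toFinset ×ˢ F).card := hcard
    _ = ht.toFinset.card * F.card := Finset.card_product _ _
    _ ≤ (ht.toFinset.card + 1) * maxSep (g ∘ f) (n + 1) δ := by
        have h1 : F.card ≤ maxSep (g ∘ f) (n + 1) δ :=
          le_trans (le_of_eq hFc) (maxSep_mono_n (g ∘ f) (Nat.le_succ n) hδ0)
        exact Nat.mul_le_mul (by omega) h1

/-- One inequality. -/
lemma topEnt_comp_le {X Y : Type*} [MetricSpace X] [CompactSpace X]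
    [MetricSpace Y] [CompactSpace Y] (f : X → Y) (g : Y → X)
    (hf : Continuous f) : topEnt (f ∘ g) ≤ topEnt (g ∘ f) := by
  apply iSup₂_le
  intro ε hε
  obtain ⟨δ, hδ0, C, hC1, hkey⟩ := key_estimate f g hf hε
  have hle : (Filter.atTop.limsup fun n : ℕ =>
      ((Real.log (maxSep (f ∘ g) n ε) / n : ℝ) : EReal)) ≤
      Filter.atTop.limsup fun n : ℕ =>
      ((Real.log (maxSep (g ∘ f) n δ) / n : ℝ) : EReal) := by
    set u : ℕ → EReal := fun n => ((Real.log (C : ℕ) / n : ℝ) : EReal) with hu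
    set v : ℕ → EReal := fun n => ((Real.log (maxSep (g ∘ f) n δ) / n : ℝ) : EReal)
      with hv
    have hulim : Filter.atTop.limsup u = 0 := by
      have : Tendsto u atTop (𝓝 ((0 : ℝ) : EReal)) := by
        apply Tendsto.comp (continuous_coe_real_ereal.tendsto _)
        exact tendsto_const_div_atTop_nhds_zero_nat _
      simpa using this.limsup_eq
    have hev : (fun n : ℕ => ((Real.log (maxSep (f ∘ g) n ε) / n : ℝ) : EReal)) ≤ᶠ[atTop]
        u + v := by
      filter_upwards [eventually_ge_atTop 1] with n hn
      obtain ⟨m, rfl⟩ := Nat.exists_eq_succ_of_ne_zero (by omega : n ≠ 0)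
      have hb := hkey m
      have hlog : Real.log (maxSep (f ∘ g) (m + 1) ε) ≤
          Real.log C + Real.log (maxSep (g ∘ f) (m + 1) δ) := log_le_of_le_mul hb
      have hdiv : Real.log (maxSep (f ∘ g) (m + 1) ε) / (m + 1 : ℕ) ≤
          Real.log C / (m + 1 : ℕ) + Real.log (maxSep (g ∘ f) (m + 1) δ) / (m + 1 : ℕ) := by
        rw [← add_div]
        have hpos : (0 : ℝ) < ((m + 1 : ℕ) : ℝ) := by positivity
        exact div_le_div_of_nonneg_right hlog hpos.le
      simp only [Pi.add_apply, hu, hv]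
      rw [← EReal.coe_add]
      exact_mod_cast hdiv
    calc (Filter.atTop.limsup fun n : ℕ =>
        ((Real.log (maxSep (f ∘ g) n ε) / n : ℝ) : EReal)) ≤
        Filter.atTop.limsup (u + v) := limsup_le_limsup hev
      _ ≤ Filter.atTop.limsup u + Filter.atTop.limsup v := by
          apply EReal.limsup_add_le
          · left; rw [hulim]; simp
          · left; rw [hulim]; simp
      _ = Filter.atTop.limsup v := by rw [hulim, zero_add]
  exact hle.trans (le_iSup₂_of_le δ hδ0 le_rfl)

/-- The topological entropy of `f ∘ g` equals that of `g ∘ f`. -/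
theorem topEnt_comp_comm {X Y : Type*} [MetricSpace X] [CompactSpace X]
    [MetricSpace Y] [CompactSpace Y] (f : X → Y) (g : Y → X)
    (hf : Continuous f) (hg : Continuous g) :
    topEnt (f ∘ g) = topEnt (g ∘ f) := by
  exact le_antisymm (topEnt_comp_le f g hf) (topEnt_comp_le g f hg)
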